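/- Suppose F = (1/n) Σ_{i=1}^n f_i is average-L-smooth, and let F* be a lower bound of F. Run SARAH with learning rate η = 2/(3L√(m+1)). Then η ≤ 2/(L(√(1+4m)+1)), and for every ε > 0, if the number of outer iterations S satisfies S ≥ 3L(F(w̃_0) − F*)/(√(m+1) ε), then (1/((m+1)S)) Σ_{s=1}^{S} Σ_{t=0}^{m} E[‖∇F(w_t^{(s)})‖²] ≤ ε. Moreover the total number of stochastic gradient evaluations equals S(n + 2m). -/

import Mathlib

noncomputable section

abbrev Vec (d : ℕ) : Type := EuclideanSpace ℝ (Fin d)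

/-- One inner loop of SARAH: `(innerSeq d n f F η x0 ι t) = (w_t, v_t)`, where the step from
`t` to `t+1` uses the sampled index `ι t` (so `ι t` plays the role of `i_{t+1}`). -/
noncomputable def innerSeq (d n : ℕ) (f : Fin n → Vec d → ℝ) (F : Vec d → ℝ) (η : ℝ)
    (x0 : Vec d) (ι : ℕ → Fin n) : ℕ → Vec d × Vec d
  | 0 => (x0, gradient F x0)
  | t + 1 =>
    let p := innerSeq d n f F η x0 ι t
    let w := p.1 - η • p.2
    (w, gradient (f (ι t)) w - gradient (f (ι t)) p.1 + p.2)

/-- Outer iterates of SARAH: `outerSeq d n m f F η w0 ω s = w̃_s`, where the `s`-th outer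
loop uses the index sequence `ω s` and `w̃_s = w_{m+1}^{(s)}`. -/
noncomputable def outerSeq (d n m : ℕ) (f : Fin n → Vec d → ℝ) (F : Vec d → ℝ) (η : ℝ)
    (w0 : Vec d) (ω : ℕ → ℕ → Fin n) : ℕ → Vec d
  | 0 => w0
  | s + 1 => (innerSeq d n f F η (outerSeq d n m f F η w0 ω s) (ω s) (m + 1)).1

/-- Expectation over the uniformly random index sequences of SARAH with (at least) `S` outer
loops of `m` inner steps each: the average of `X` over all `ω : Fin S → Fin m → Fin n`,
extended by a dummy index outside this range. -/
noncomputable def sarahE (n m S : ℕ) (hn : 0 < n) (X : (ℕ → ℕ → Fin n) → ℝ) : ℝ :=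
  (∑ ω : Fin S → Fin m → Fin n,
      X fun s t => if h : s < S ∧ t < m then ω ⟨s, h.1⟩ ⟨t, h.2⟩ else ⟨0, hn⟩) /
    (Fintype.card (Fin S → Fin m → Fin n) : ℝ)


/-- Total number of stochastic gradient evaluations of SARAH: each of the `S` outer
iterations uses `n` evaluations for the full gradient and `2m` in the inner loop. -/
def sarahCost (n m S : ℕ) : ℕ := S * (n + 2 * m)


open InnerProductSpace intervalIntegral

def extIdx {n : ℕ} (hn : 0 < n) (m : ℕ) (σ : Fin m → Fin n) : ℕ → Fin n :=
  fun j => if h : j < m then σ ⟨j, h⟩ else ⟨0, hn⟩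

lemma innerSeq_congr (d n : ℕ) (f : Fin n → Vec d → ℝ) (F : Vec d → ℝ) (η : ℝ)
    (x0 : Vec d) {ι ι' : ℕ → Fin n} :
    ∀ t : ℕ, (∀ j, j < t → ι j = ι' j) →
      innerSeq d n f F η x0 ι t = innerSeq d n f F η x0 ι' t := by
  intro t
  induction t with
  | zero => intro _; rfl
  | succ t ih =>
    intro h
    simp only [innerSeq]
    rw [ih (fun j hj => h j (hj.trans (Nat.lt_succ_self t))), h t (Nat.lt_succ_self t)]

lemma avg_update {A B : Type*} [Fintype A] [DecidableEq A] [Fintype B]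
    (g : (A → B) → ℝ) (k : A) :
    ∑ σ : A → B, ∑ b : B, g (Function.update σ k b)
      = (Fintype.card B : ℝ) * ∑ σ : A → B, g σ := by
  have hinv : Function.Involutive
      (fun p : (A → B) × B => (Function.update p.1 k p.2, p.1 k)) := by
    rintro ⟨σ, b⟩
    simp [Function.update_idem]
  calc ∑ σ : A → B, ∑ b : B, g (Function.update σ k b)
      = ∑ p : (A → B) × B, g (Function.update p.1 k p.2) := by
        rw [Fintype.sum_prod_type]
    _ = ∑ p : (A → B) × B, g p.1 :=
        Fintype.sum_bijective _ hinv.bijective _ _ (fun p => rfl)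
    _ = (Fintype.card B : ℝ) * ∑ σ : A → B, g σ := by
        rw [Fintype.sum_prod_type]
        simp only [Finset.sum_const, Finset.card_univ, nsmul_eq_mul]
        rw [Finset.mul_sum]

lemma sum_norm_add_sq {d : ℕ} {ι : Type*} [Fintype ι] (b : ι → Vec d) (A : Vec d) :
    ∑ i, ‖b i + A‖ ^ 2
      = (∑ i, ‖b i‖ ^ 2) + 2 * ⟪(∑ i, b i), A⟫_ℝ + (Fintype.card ι : ℝ) * ‖A‖ ^ 2 := by
  simp only [norm_add_sq_real, Finset.sum_add_distrib, sum_inner, Finset.mul_sum]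
  simp [Finset.sum_const, Finset.mul_sum, mul_comm]

lemma cond_var {d n : ℕ} (hn : 0 < n) {f : Fin n → Vec d → ℝ} {G : Vec d → Vec d} {L : ℝ}
    (hG : ∀ x, (n : ℝ) • G x = ∑ i, gradient (f i) x)
    (havg : ∀ w w' : Vec d,
      (∑ i, ‖gradient (f i) w - gradient (f i) w'‖ ^ 2) / n ≤ L ^ 2 * ‖w - w'‖ ^ 2)
    (w w' a : Vec d) :
    ∑ i, ‖gradient (f i) w - gradient (f i) w' + a - G w‖ ^ 2
      ≤ n * ‖a - G w'‖ ^ 2 + n * (L ^ 2 * ‖w - w'‖ ^ 2) := by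
  set c : Fin n → Vec d := fun i => gradient (f i) w - gradient (f i) w' with hc
  set D : Vec d := G w - G w' with hD
  set A : Vec d := a - G w' with hA
  have hsumc : ∑ i, c i = (n : ℝ) • D := by
    simp only [hc, hD, Finset.sum_sub_distrib, hG, smul_sub]
  have hkey : ∀ i, gradient (f i) w - gradient (f i) w' + a - G w = (c i - D) + A := by
    intro i; simp only [hc, hD, hA]; abel
  simp only [hkey]
  have e1 : ∑ i, ‖c i - D + A‖ ^ 2
      = (∑ i, ‖c i - D‖ ^ 2) + 2 * ⟪(∑ i, (c i - D)), A⟫_ℝ + (n : ℝ) * ‖A‖ ^ 2 := by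
    simpa using sum_norm_add_sq (fun i => c i - D) A
  have hzero : ∑ i, (c i - D) = 0 := by
    rw [Finset.sum_sub_distrib, hsumc]
    simp [Nat.cast_smul_eq_nsmul ℝ]
  have e2 : ∑ i, ‖c i - D‖ ^ 2
      = (∑ i, ‖c i‖ ^ 2) - (n : ℝ) * ‖D‖ ^ 2 := by
    have := sum_norm_add_sq (fun i => c i) (-D)
    simp only [← sub_eq_add_neg] at this
    rw [this, hsumc, inner_neg_right, real_inner_smul_left, real_inner_self_eq_norm_sq]
    simp
    ring
  have hc2 : ∑ i, ‖c i‖ ^ 2 ≤ (n : ℝ) * (L ^ 2 * ‖w - w'‖ ^ 2) := by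
    have h := havg w w'
    rw [div_le_iff₀ (by positivity)] at h
    calc ∑ i, ‖c i‖ ^ 2 = ∑ i, ‖gradient (f i) w - gradient (f i) w'‖ ^ 2 := rfl
      _ ≤ L ^ 2 * ‖w - w'‖ ^ 2 * n := h
      _ = (n : ℝ) * (L ^ 2 * ‖w - w'‖ ^ 2) := by ring
  rw [e1, hzero, e2]
  have hD2 : 0 ≤ (n : ℝ) * ‖D‖ ^ 2 := by positivity
  simp only [inner_zero_left]
  linarith

lemma descent {d : ℕ} {F : Vec d → ℝ} {G : Vec d → Vec d} {L : ℝ} (hL : 0 ≤ L)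
    (hG : ∀ x, HasGradientAt F (G x) x)
    (hLip : ∀ w w', ‖G w - G w'‖ ≤ L * ‖w - w'‖) (x y : Vec d) :
    F y ≤ F x + ⟪G x, y - x⟫_ℝ + L / 2 * ‖y - x‖ ^ 2 := by
  set Δ := y - x with hΔ
  have key : ∀ τ : ℝ, HasDerivAt (fun τ : ℝ => F (x + τ • Δ)) (⟪G (x + τ • Δ), Δ⟫_ℝ) τ := by
    intro τ
    have hline : HasDerivAt (fun τ : ℝ => x + τ • Δ) Δ τ := by
      simpa using ((hasDerivAt_id τ).smul_const Δ).const_add x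
    have hf := hG (x + τ • Δ)
    rw [hasGradientAt_iff_hasFDerivAt] at hf
    have := hf.comp_hasDerivAt τ hline
    simpa [toDual_apply_apply, Function.comp_def] using this
  have contG : Continuous G := by
    refine (LipschitzWith.of_dist_le_mul (K := ⟨L, hL⟩) ?_).continuous
    intro w w'
    rw [dist_eq_norm, dist_eq_norm]; exact hLip w w'
  have hcont1 : Continuous fun τ : ℝ => ⟪G (x + τ • Δ), Δ⟫_ℝ :=
    (contG.comp (by continuity)).inner continuous_const
  have hInt : IntervalIntegrable (fun τ : ℝ => ⟪G (x + τ • Δ), Δ⟫_ℝ)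
      MeasureTheory.volume 0 1 := hcont1.intervalIntegrable _ _
  have hftc : ∫ τ in (0:ℝ)..1, ⟪G (x + τ • Δ), Δ⟫_ℝ = F y - F x := by
    rw [integral_eq_sub_of_hasDerivAt (fun τ _ => key τ) hInt]
    simp [hΔ]
  have hInt2 : IntervalIntegrable (fun τ : ℝ => ⟪G x, Δ⟫_ℝ + L * ‖Δ‖ ^ 2 * τ)
      MeasureTheory.volume 0 1 := (by continuity : Continuous fun τ : ℝ => ⟪G x, Δ⟫_ℝ + L * ‖Δ‖ ^ 2 * τ).intervalIntegrable _ _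
  have hmono : ∫ τ in (0:ℝ)..1, ⟪G (x + τ • Δ), Δ⟫_ℝ
      ≤ ∫ τ in (0:ℝ)..1, (⟪G x, Δ⟫_ℝ + L * ‖Δ‖ ^ 2 * τ) := by
    refine integral_mono_on zero_le_one hInt hInt2 ?_
    intro τ hτ
    have h1 : ⟪G (x + τ • Δ), Δ⟫_ℝ = ⟪G x, Δ⟫_ℝ + ⟪G (x + τ • Δ) - G x, Δ⟫_ℝ := by
      rw [inner_sub_left]; ring
    rw [h1]
    gcongr _ + ?_
    calc ⟪G (x + τ • Δ) - G x, Δ⟫_ℝ ≤ ‖G (x + τ • Δ) - G x‖ * ‖Δ‖ := real_inner_le_norm _ _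
      _ ≤ (L * ‖x + τ • Δ - x‖) * ‖Δ‖ := by
          gcongr; exact hLip _ _
      _ = L * ‖Δ‖ ^ 2 * τ := by
          rw [show x + τ • Δ - x = τ • Δ by abel, norm_smul]
          rw [Real.norm_eq_abs, abs_of_nonneg hτ.1]
          ring
  have hval : ∫ τ in (0:ℝ)..1, (⟪G x, Δ⟫_ℝ + L * ‖Δ‖ ^ 2 * τ)
      = ⟪G x, Δ⟫_ℝ + L / 2 * ‖Δ‖ ^ 2 := by
    rw [integral_add (intervalIntegrable_const)
      ((intervalIntegrable_id).const_mul _), integral_const, integral_const_mul, integral_id]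
    simp; ring
  rw [hftc] at hmono
  rw [hval] at hmono
  linarith

lemma hasGradAvg {d n : ℕ} (f : Fin n → Vec d → ℝ)
    (hdiff : ∀ i, Differentiable ℝ (f i)) (x : Vec d) :
    HasGradientAt (fun w => (∑ i, f i w) / n) ((n:ℝ)⁻¹ • ∑ i, gradient (f i) x) x := by
  have h1 : HasFDerivAt (fun w => ∑ i, f i w)
      (∑ i, (toDual ℝ (Vec d)) (gradient (f i) x)) x := by
    apply HasFDerivAt.fun_sum
    intro i _
    have hg := ((hdiff i) x).hasGradientAt
    rw [hasGradientAt_iff_hasFDerivAt] at hg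
    exact hg
  have h2 := h1.const_smul ((n:ℝ)⁻¹)
  rw [hasGradientAt_iff_hasFDerivAt]
  have hfun : (fun w => (∑ i, f i w) / n) = (n:ℝ)⁻¹ • fun w => ∑ i, f i w := by
    funext w
    simp [div_eq_inv_mul]
  rw [hfun, map_smul, map_sum]
  exact h2

set_option maxHeartbeats 2000000 in
lemma loop_bound (d n m : ℕ) (hn : 0 < n)
    (f : Fin n → Vec d → ℝ) (F : Vec d → ℝ) (L η : ℝ)
    (hL : 0 < L) (hη : 0 < η)
    (hcoef : L ^ 2 * η ^ 2 * m + L * η ≤ 1)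
    (hGrad : ∀ x, HasGradientAt F (gradient F x) x)
    (hGavg : ∀ x : Vec d, (n : ℝ) • gradient F x = ∑ i, gradient (f i) x)
    (hLip : ∀ w w' : Vec d, ‖gradient F w - gradient F w'‖ ≤ L * ‖w - w'‖)
    (havg : ∀ w w' : Vec d,
      (∑ i, ‖gradient (f i) w - gradient (f i) w'‖ ^ 2) / n ≤ L ^ 2 * ‖w - w'‖ ^ 2)
    (x0 : Vec d) :
    ∑ σ : Fin m → Fin n, ∑ t ∈ Finset.range (m + 1),
        ‖gradient F (innerSeq d n f F η x0 (extIdx hn m σ) t).1‖ ^ 2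
      ≤ 2 / η * ∑ σ : Fin m → Fin n,
          (F x0 - F (innerSeq d n f F η x0 (extIdx hn m σ) (m + 1)).1) := by
  classical
  set W : ℕ → (Fin m → Fin n) → Vec d :=
    fun t σ => (innerSeq d n f F η x0 (extIdx hn m σ) t).1 with hWdef
  set V : ℕ → (Fin m → Fin n) → Vec d :=
    fun t σ => (innerSeq d n f F η x0 (extIdx hn m σ) t).2 with hVdef
  have hW0 : ∀ σ, W 0 σ = x0 := fun _ => rfl
  have hV0 : ∀ σ, V 0 σ = gradient F x0 := fun _ => rfl
  have hWsucc : ∀ t σ, W (t + 1) σ = W t σ - η • V t σ := fun _ _ => rfl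
  have hVsucc : ∀ t σ, V (t + 1) σ =
      gradient (f (extIdx hn m σ t)) (W (t + 1) σ)
        - gradient (f (extIdx hn m σ t)) (W t σ) + V t σ := fun _ _ => rfl
  have hseq_congr : ∀ (t : ℕ) (σ : Fin m → Fin n) (k : Fin m) (i : Fin n), t ≤ (k : ℕ) →
      innerSeq d n f F η x0 (extIdx hn m (Function.update σ k i)) t
        = innerSeq d n f F η x0 (extIdx hn m σ) t := by
    intro t σ k i htk
    apply innerSeq_congr
    intro j hj
    have hjm : j < m := lt_of_lt_of_le hj (le_trans htk (le_of_lt k.2))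
    have hjk : (⟨j, hjm⟩ : Fin m) ≠ k := by
      intro hcon
      have : j = (k : ℕ) := by simpa using congrArg Fin.val hcon
      omega
    simp only [extIdx]
    rw [dif_pos hjm, dif_pos hjm, Function.update_of_ne hjk]
  have hdesc : ∀ (t : ℕ) (σ : Fin m → Fin n),
      F (W (t + 1) σ) ≤ F (W t σ) - η / 2 * ‖gradient F (W t σ)‖ ^ 2
        - (η / 2 - L * η ^ 2 / 2) * ‖V t σ‖ ^ 2
        + η / 2 * ‖gradient F (W t σ) - V t σ‖ ^ 2 := by
    intro t σ
    have h := descent hL.le hGrad hLip (W t σ) (W (t + 1) σ)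
    have hyx : W (t + 1) σ - W t σ = -(η • V t σ) := by rw [hWsucc]; abel
    rw [hyx] at h
    have hinner : ⟪gradient F (W t σ), -(η • V t σ)⟫_ℝ
        = -(η * ⟪gradient F (W t σ), V t σ⟫_ℝ) := by
      rw [inner_neg_right, real_inner_smul_right]
    have hnorm : ‖-(η • V t σ)‖ ^ 2 = η ^ 2 * ‖V t σ‖ ^ 2 := by
      rw [norm_neg, norm_smul, Real.norm_eq_abs, abs_of_pos hη, mul_pow]
    have hpolar : ‖gradient F (W t σ) - V t σ‖ ^ 2
        = ‖gradient F (W t σ)‖ ^ 2 - 2 * ⟪gradient F (W t σ), V t σ⟫_ℝ + ‖V t σ‖ ^ 2 :=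
      norm_sub_sq_real _ _
    rw [hinner, hnorm] at h
    nlinarith [h, hpolar]
  set Sg : (Fin m → Fin n) → ℝ :=
    fun σ => ∑ t ∈ Finset.range (m + 1), ‖gradient F (W t σ)‖ ^ 2 with hSgdef
  set Sv : (Fin m → Fin n) → ℝ :=
    fun σ => ∑ t ∈ Finset.range (m + 1), ‖V t σ‖ ^ 2 with hSvdef
  set Sd : (Fin m → Fin n) → ℝ :=
    fun σ => ∑ t ∈ Finset.range (m + 1), ‖gradient F (W t σ) - V t σ‖ ^ 2 with hSddef
  have hA : ∀ σ, F (W (m + 1) σ) - F x0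
      ≤ -(η / 2) * Sg σ - (η / 2 - L * η ^ 2 / 2) * Sv σ + η / 2 * Sd σ := by
    intro σ
    have htel : F (W (m + 1) σ) - F (W 0 σ)
        = ∑ t ∈ Finset.range (m + 1), (F (W (t + 1) σ) - F (W t σ)) :=
      (Finset.sum_range_sub (fun t => F (W t σ)) (m + 1)).symm
    rw [hW0] at htel
    have hrhs : -(η / 2) * Sg σ - (η / 2 - L * η ^ 2 / 2) * Sv σ + η / 2 * Sd σ
        = ∑ t ∈ Finset.range (m + 1),
            (-(η / 2 * ‖gradient F (W t σ)‖ ^ 2)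
              - (η / 2 - L * η ^ 2 / 2) * ‖V t σ‖ ^ 2
              + η / 2 * ‖gradient F (W t σ) - V t σ‖ ^ 2) := by
      simp only [hSgdef, hSvdef, hSddef, Finset.mul_sum, neg_mul,
        ← Finset.sum_neg_distrib, ← Finset.sum_sub_distrib, ← Finset.sum_add_distrib]
    rw [htel, hrhs]
    exact Finset.sum_le_sum fun t _ => by linarith [hdesc t σ]
  set Dt : ℕ → ℝ :=
    fun t => ∑ σ : Fin m → Fin n, ‖gradient F (W t σ) - V t σ‖ ^ 2 with hDtdef
  set SVt : ℕ → ℝ := fun t => ∑ σ : Fin m → Fin n, ‖V t σ‖ ^ 2 with hSVtdef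
  have hD0 : Dt 0 = 0 := by
    simp only [hDtdef]
    refine Finset.sum_eq_zero fun σ _ => ?_
    rw [hV0, hW0]
    simp
  have hSVt_nonneg : ∀ t, 0 ≤ SVt t :=
    fun t => Finset.sum_nonneg fun σ _ => by positivity
  have hDrec : ∀ t, t < m → Dt (t + 1) ≤ Dt t + L ^ 2 * η ^ 2 * SVt t := by
    intro t ht
    set k : Fin m := ⟨t, ht⟩ with hkdef
    have key := avg_update
      (fun σ => ‖gradient F (W (t + 1) σ) - V (t + 1) σ‖ ^ 2) k
    have hpoint : ∀ σ : Fin m → Fin n,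
        ∑ i : Fin n, ‖gradient F (W (t + 1) (Function.update σ k i))
            - V (t + 1) (Function.update σ k i)‖ ^ 2
          ≤ (n : ℝ) * ‖gradient F (W t σ) - V t σ‖ ^ 2
            + (n : ℝ) * (L ^ 2 * (η ^ 2 * ‖V t σ‖ ^ 2)) := by
      intro σ
      have hWt : ∀ i, W t (Function.update σ k i) = W t σ :=
        fun i => congrArg Prod.fst (hseq_congr t σ k i (le_refl t))
      have hVt : ∀ i, V t (Function.update σ k i) = V t σ :=
        fun i => congrArg Prod.snd (hseq_congr t σ k i (le_refl t))
      have hWt1 : ∀ i, W (t + 1) (Function.update σ k i) = W (t + 1) σ := by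
        intro i; rw [hWsucc, hWsucc, hWt, hVt]
      have hidx : ∀ i, extIdx hn m (Function.update σ k i) t = i := by
        intro i
        simp only [extIdx, dif_pos ht]
        exact Function.update_self _ _ _
      have hVt1 : ∀ i, V (t + 1) (Function.update σ k i)
          = gradient (f i) (W (t + 1) σ) - gradient (f i) (W t σ) + V t σ := by
        intro i; rw [hVsucc, hidx, hWt1, hWt, hVt]
      have hcv := cond_var hn hGavg havg (W (t + 1) σ) (W t σ) (V t σ)
      have hwdiff : ‖W (t + 1) σ - W t σ‖ ^ 2 = η ^ 2 * ‖V t σ‖ ^ 2 := by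
        rw [hWsucc, show W t σ - η • V t σ - W t σ = -(η • V t σ) by abel,
          norm_neg, norm_smul, Real.norm_eq_abs, abs_of_pos hη, mul_pow]
      calc ∑ i : Fin n, ‖gradient F (W (t + 1) (Function.update σ k i))
              - V (t + 1) (Function.update σ k i)‖ ^ 2
          = ∑ i : Fin n, ‖gradient (f i) (W (t + 1) σ) - gradient (f i) (W t σ)
              + V t σ - gradient F (W (t + 1) σ)‖ ^ 2 := by
            refine Finset.sum_congr rfl fun i _ => ?_
            rw [hWt1, hVt1, norm_sub_rev]
        _ ≤ (n : ℝ) * ‖V t σ - gradient F (W t σ)‖ ^ 2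
              + (n : ℝ) * (L ^ 2 * ‖W (t + 1) σ - W t σ‖ ^ 2) := hcv
        _ = (n : ℝ) * ‖gradient F (W t σ) - V t σ‖ ^ 2
              + (n : ℝ) * (L ^ 2 * (η ^ 2 * ‖V t σ‖ ^ 2)) := by
            rw [norm_sub_rev (V t σ), hwdiff]
    have hkey2 : (n : ℝ) * Dt (t + 1)
        ≤ (n : ℝ) * (Dt t + L ^ 2 * η ^ 2 * SVt t) := by
      have hc : (Fintype.card (Fin n) : ℝ) = (n : ℝ) := by simp
      rw [hc] at key
      rw [← key]
      calc ∑ σ : Fin m → Fin n, ∑ i : Fin n,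
            ‖gradient F (W (t + 1) (Function.update σ k i))
              - V (t + 1) (Function.update σ k i)‖ ^ 2
          ≤ ∑ σ : Fin m → Fin n,
              ((n : ℝ) * ‖gradient F (W t σ) - V t σ‖ ^ 2
                + (n : ℝ) * (L ^ 2 * (η ^ 2 * ‖V t σ‖ ^ 2))) :=
            Finset.sum_le_sum fun σ _ => hpoint σ
        _ = (n : ℝ) * (Dt t + L ^ 2 * η ^ 2 * SVt t) := by
            simp only [hDtdef, hSVtdef, mul_add, Finset.mul_sum, ← Finset.sum_add_distrib]
            exact Finset.sum_congr rfl fun σ _ => by ring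
    have hnpos : (0 : ℝ) < n := by exact_mod_cast hn
    exact le_of_mul_le_mul_left hkey2 hnpos
  have hDbound : ∀ t, t ≤ m →
      Dt t ≤ L ^ 2 * η ^ 2 * ∑ j ∈ Finset.range t, SVt j := by
    intro t
    induction t with
    | zero => intro _; simp [hD0]
    | succ t ih =>
      intro ht
      have h1 := hDrec t (by omega)
      have h2 := ih (by omega)
      rw [Finset.sum_range_succ]
      calc Dt (t + 1) ≤ Dt t + L ^ 2 * η ^ 2 * SVt t := h1
        _ ≤ L ^ 2 * η ^ 2 * (∑ j ∈ Finset.range t, SVt j)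
              + L ^ 2 * η ^ 2 * SVt t := by linarith
        _ = _ := by ring
  -- global sums
  set SG : ℝ := ∑ σ : Fin m → Fin n, Sg σ with hSGdef
  set SV : ℝ := ∑ σ : Fin m → Fin n, Sv σ with hSVdef
  set SD : ℝ := ∑ σ : Fin m → Fin n, Sd σ with hSDdef
  set R : ℝ := ∑ σ : Fin m → Fin n, (F x0 - F (W (m + 1) σ)) with hRdef
  have hSVcomm : SV = ∑ t ∈ Finset.range (m + 1), SVt t := by
    rw [hSVdef, hSVtdef, hSvdef]
    exact Finset.sum_comm
  have hSDcomm : SD = ∑ t ∈ Finset.range (m + 1), Dt t := by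
    rw [hSDdef, hDtdef, hSddef]
    exact Finset.sum_comm
  have hSDle : SD ≤ L ^ 2 * η ^ 2 * m * SV := by
    rw [hSDcomm, hSVcomm]
    set T : ℝ := ∑ t ∈ Finset.range (m + 1), SVt t with hTdef
    have hTsub : ∀ t, t ≤ m → ∑ j ∈ Finset.range t, SVt j ≤ T := by
      intro t ht
      refine Finset.sum_le_sum_of_subset_of_nonneg
        (Finset.range_subset_range.mpr (by omega)) (fun j _ _ => hSVt_nonneg j)
    calc ∑ t ∈ Finset.range (m + 1), Dt t
        ≤ ∑ t ∈ Finset.range (m + 1), L ^ 2 * η ^ 2 * ∑ j ∈ Finset.range t, SVt j :=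
          Finset.sum_le_sum fun t htt =>
            hDbound t (by simp only [Finset.mem_range] at htt; omega)
      _ ≤ (m : ℝ) * (L ^ 2 * η ^ 2 * T) := by
          rw [Finset.sum_range_succ']
          simp only [Finset.range_zero, Finset.sum_empty, mul_zero, add_zero]
          calc ∑ t ∈ Finset.range m, L ^ 2 * η ^ 2 * ∑ j ∈ Finset.range (t + 1), SVt j
              ≤ ∑ _t ∈ Finset.range m, L ^ 2 * η ^ 2 * T := by
                refine Finset.sum_le_sum fun t htt => ?_
                have := hTsub (t + 1) (by simp only [Finset.mem_range] at htt; omega)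
                exact mul_le_mul_of_nonneg_left this (by positivity)
            _ = (m : ℝ) * (L ^ 2 * η ^ 2 * T) := by
                rw [Finset.sum_const, Finset.card_range, nsmul_eq_mul]
      _ = L ^ 2 * η ^ 2 * m * T := by ring
  have hAsum : -R ≤ -(η / 2) * SG - (η / 2 - L * η ^ 2 / 2) * SV + η / 2 * SD := by
    have h := Finset.sum_le_sum (fun σ (_ : σ ∈ Finset.univ) => hA σ)
    have hL1 : ∑ σ : Fin m → Fin n, (F (W (m + 1) σ) - F x0) = -R := by
      rw [hRdef, ← Finset.sum_neg_distrib]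
      exact Finset.sum_congr rfl fun σ _ => by ring
    have hR1 : ∑ σ : Fin m → Fin n,
        (-(η / 2) * Sg σ - (η / 2 - L * η ^ 2 / 2) * Sv σ + η / 2 * Sd σ)
        = -(η / 2) * SG - (η / 2 - L * η ^ 2 / 2) * SV + η / 2 * SD := by
      rw [hSGdef, hSVdef, hSDdef, Finset.mul_sum, Finset.mul_sum, Finset.mul_sum,
        ← Finset.sum_sub_distrib, ← Finset.sum_add_distrib]
    rw [hL1, hR1] at h
    exact h
  have hSVnn : 0 ≤ SV := by
    rw [hSVcomm]
    exact Finset.sum_nonneg fun t _ => hSVt_nonneg t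
  show SG ≤ 2 / η * R
  rw [div_mul_eq_mul_div, le_div_iff₀ hη]
  nlinarith [hAsum, hSDle, hSVnn, hη, hcoef,
    mul_le_mul_of_nonneg_left hSDle (by positivity : (0 : ℝ) ≤ η / 2),
    mul_nonneg (mul_nonneg hη.le hSVnn) (sub_nonneg.mpr hcoef)]

def ext2 {n : ℕ} (hn : 0 < n) (m S : ℕ) (ω : Fin S → Fin m → Fin n) : ℕ → ℕ → Fin n :=
  fun s t => if h : s < S ∧ t < m then ω ⟨s, h.1⟩ ⟨t, h.2⟩ else ⟨0, hn⟩

lemma outerSeq_congr (d n m : ℕ) (f : Fin n → Vec d → ℝ) (F : Vec d → ℝ) (η : ℝ)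
    (w0 : Vec d) {ω ω' : ℕ → ℕ → Fin n} :
    ∀ s : ℕ, (∀ j, j < s → ω j = ω' j) →
      outerSeq d n m f F η w0 ω s = outerSeq d n m f F η w0 ω' s := by
  intro s
  induction s with
  | zero => intro _; rfl
  | succ s ih =>
    intro h
    simp only [outerSeq]
    rw [ih (fun j hj => h j (hj.trans (Nat.lt_succ_self s))), h s (Nat.lt_succ_self s)]

set_option maxHeartbeats 2000000 in
lemma outer_bound (d n m S : ℕ) (hn : 0 < n)
    (f : Fin n → Vec d → ℝ) (F : Vec d → ℝ) (L η : ℝ)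
    (hL : 0 < L) (hη : 0 < η)
    (hcoef : L ^ 2 * η ^ 2 * m + L * η ≤ 1)
    (hGrad : ∀ x, HasGradientAt F (gradient F x) x)
    (hGavg : ∀ x : Vec d, (n : ℝ) • gradient F x = ∑ i, gradient (f i) x)
    (hLip : ∀ w w' : Vec d, ‖gradient F w - gradient F w'‖ ≤ L * ‖w - w'‖)
    (havg : ∀ w w' : Vec d,
      (∑ i, ‖gradient (f i) w - gradient (f i) w'‖ ^ 2) / n ≤ L ^ 2 * ‖w - w'‖ ^ 2)
    (w0 : Vec d) (Fstar : ℝ) (hFstar : ∀ w, Fstar ≤ F w) :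
    ∑ s ∈ Finset.range S, ∑ ω : Fin S → Fin m → Fin n, ∑ t ∈ Finset.range (m + 1),
        ‖gradient F (innerSeq d n f F η
            (outerSeq d n m f F η w0 (ext2 hn m S ω) s) (ext2 hn m S ω s) t).1‖ ^ 2
      ≤ 2 / η * ((Fintype.card (Fin S → Fin m → Fin n) : ℝ) * (F w0 - Fstar)) := by
  classical
  set N2 : ℝ := (Fintype.card (Fin m → Fin n) : ℝ) with hN2def
  have hN2pos : 0 < N2 := by
    rw [hN2def]
    exact_mod_cast Fintype.card_pos_iff.mpr ⟨fun _ => (⟨0, hn⟩ : Fin n)⟩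
  set P : ℕ → ℝ := fun s =>
    ∑ ω : Fin S → Fin m → Fin n, F (outerSeq d n m f F η w0 (ext2 hn m S ω) s) with hPdef
  set Q : ℕ → ℝ := fun s =>
    ∑ ω : Fin S → Fin m → Fin n, ∑ t ∈ Finset.range (m + 1),
      ‖gradient F (innerSeq d n f F η
          (outerSeq d n m f F η w0 (ext2 hn m S ω) s) (ext2 hn m S ω s) t).1‖ ^ 2 with hQdef
  have hblock : ∀ (ω : Fin S → Fin m → Fin n) (s : ℕ) (hs : s < S),
      ext2 hn m S ω s = extIdx hn m (ω ⟨s, hs⟩) := by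
    intro ω s hs
    funext t
    simp only [ext2, extIdx]
    by_cases ht : t < m
    · rw [dif_pos ⟨hs, ht⟩, dif_pos ht]
    · rw [dif_neg (by tauto), dif_neg ht]
  have hext_upd : ∀ (ω : Fin S → Fin m → Fin n) (k : Fin S) (τ : Fin m → Fin n) (j : ℕ),
      j ≠ (k : ℕ) → ext2 hn m S (Function.update ω k τ) j = ext2 hn m S ω j := by
    intro ω k τ j hj
    funext t
    simp only [ext2]
    by_cases h : j < S ∧ t < m
    · rw [dif_pos h, dif_pos h, Function.update_of_ne (by
        intro hcon
        exact hj (by simpa using congrArg Fin.val hcon))]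
    · rw [dif_neg h, dif_neg h]
  have houter : ∀ (s : ℕ) (ω : Fin S → Fin m → Fin n) (k : Fin S) (τ : Fin m → Fin n),
      s ≤ (k : ℕ) →
      outerSeq d n m f F η w0 (ext2 hn m S (Function.update ω k τ)) s
        = outerSeq d n m f F η w0 (ext2 hn m S ω) s := by
    intro s ω k τ hsk
    exact outerSeq_congr d n m f F η w0 s
      (fun j hj => hext_upd ω k τ j (by omega))
  have hstep : ∀ s, s < S → Q s ≤ 2 / η * (P s - P (s + 1)) := by
    intro s hs
    set k : Fin S := ⟨s, hs⟩ with hkdef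
    have key := avg_update (fun ω : Fin S → Fin m → Fin n =>
      ∑ t ∈ Finset.range (m + 1),
        ‖gradient F (innerSeq d n f F η
            (outerSeq d n m f F η w0 (ext2 hn m S ω) s) (ext2 hn m S ω s) t).1‖ ^ 2) k
    have key2 := avg_update (fun ω : Fin S → Fin m → Fin n =>
      F (outerSeq d n m f F η w0 (ext2 hn m S ω) (s + 1))) k
    have hblk : ∀ (ω : Fin S → Fin m → Fin n) (τ : Fin m → Fin n),
        ext2 hn m S (Function.update ω k τ) s = extIdx hn m τ := by
      intro ω τ
      rw [hblock _ s hs,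
        show Function.update ω k τ ⟨s, hs⟩ = τ from by
          rw [hkdef]; exact Function.update_self _ _ _]
    have hx0 : ∀ (ω : Fin S → Fin m → Fin n) (τ : Fin m → Fin n),
        outerSeq d n m f F η w0 (ext2 hn m S (Function.update ω k τ)) s
          = outerSeq d n m f F η w0 (ext2 hn m S ω) s :=
      fun ω τ => houter s ω k τ (le_refl s)
    have hout1 : ∀ (ω : Fin S → Fin m → Fin n) (τ : Fin m → Fin n),
        outerSeq d n m f F η w0 (ext2 hn m S (Function.update ω k τ)) (s + 1)
          = (innerSeq d n f F η
              (outerSeq d n m f F η w0 (ext2 hn m S ω) s) (extIdx hn m τ) (m + 1)).1 := by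
      intro ω τ
      show (innerSeq d n f F η
          (outerSeq d n m f F η w0 (ext2 hn m S (Function.update ω k τ)) s)
          (ext2 hn m S (Function.update ω k τ) s) (m + 1)).1 = _
      rw [hx0, hblk]
    have hmain : N2 * Q s ≤ N2 * (2 / η * (P s - P (s + 1))) := by
      have hc : (Fintype.card (Fin m → Fin n) : ℝ) = N2 := rfl
      calc N2 * Q s
          = ∑ ω : Fin S → Fin m → Fin n, ∑ τ : Fin m → Fin n,
              ∑ t ∈ Finset.range (m + 1),
                ‖gradient F (innerSeq d n f F η
                    (outerSeq d n m f F η w0 (ext2 hn m S (Function.update ω k τ)) s)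
                    (ext2 hn m S (Function.update ω k τ) s) t).1‖ ^ 2 := by
            rw [hc] at key
            exact key.symm
        _ = ∑ ω : Fin S → Fin m → Fin n, ∑ τ : Fin m → Fin n,
              ∑ t ∈ Finset.range (m + 1),
                ‖gradient F (innerSeq d n f F η
                    (outerSeq d n m f F η w0 (ext2 hn m S ω) s)
                    (extIdx hn m τ) t).1‖ ^ 2 := by
            refine Finset.sum_congr rfl fun ω _ => Finset.sum_congr rfl fun τ _ => ?_
            rw [hx0, hblk]
        _ ≤ ∑ ω : Fin S → Fin m → Fin n,
              2 / η * ∑ τ : Fin m → Fin n,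
                (F (outerSeq d n m f F η w0 (ext2 hn m S ω) s)
                  - F (innerSeq d n f F η
                      (outerSeq d n m f F η w0 (ext2 hn m S ω) s)
                      (extIdx hn m τ) (m + 1)).1) := by
            refine Finset.sum_le_sum fun ω _ => ?_
            exact loop_bound d n m hn f F L η hL hη hcoef hGrad hGavg hLip havg _
        _ = 2 / η * ∑ ω : Fin S → Fin m → Fin n, ∑ τ : Fin m → Fin n,
              (F (outerSeq d n m f F η w0 (ext2 hn m S ω) s)
                - F (innerSeq d n f F η
                    (outerSeq d n m f F η w0 (ext2 hn m S ω) s)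
                    (extIdx hn m τ) (m + 1)).1) := by
            rw [Finset.mul_sum]
        _ = 2 / η * (N2 * P s - N2 * P (s + 1)) := by
            congr 1
            have hsplit : ∀ ω : Fin S → Fin m → Fin n,
                ∑ τ : Fin m → Fin n,
                  (F (outerSeq d n m f F η w0 (ext2 hn m S ω) s)
                    - F (innerSeq d n f F η
                        (outerSeq d n m f F η w0 (ext2 hn m S ω) s)
                        (extIdx hn m τ) (m + 1)).1)
                  = N2 * F (outerSeq d n m f F η w0 (ext2 hn m S ω) s)
                    - ∑ τ : Fin m → Fin n,
                        F (outerSeq d n m f F η w0 (ext2 hn m S (Function.update ω k τ)) (s + 1)) := by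
              intro ω
              rw [Finset.sum_sub_distrib, Finset.sum_const, Finset.card_univ, nsmul_eq_mul]
              congr 1
              refine Finset.sum_congr rfl fun τ _ => ?_
              rw [hout1]
            rw [Finset.sum_congr rfl fun ω _ => hsplit ω, Finset.sum_sub_distrib,
              ← Finset.mul_sum, key2]
        _ = N2 * (2 / η * (P s - P (s + 1))) := by ring
    exact le_of_mul_le_mul_left hmain hN2pos
  have htel : ∑ s ∈ Finset.range S, (P s - P (s + 1)) = P 0 - P S :=
    Finset.sum_range_sub' P S
  have hsum : ∑ s ∈ Finset.range S, Q s ≤ 2 / η * (P 0 - P S) := by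
    calc ∑ s ∈ Finset.range S, Q s
        ≤ ∑ s ∈ Finset.range S, 2 / η * (P s - P (s + 1)) :=
          Finset.sum_le_sum fun s hss =>
            hstep s (Finset.mem_range.mp hss)
      _ = 2 / η * (P 0 - P S) := by rw [← Finset.mul_sum, htel]
  have hP0 : P 0 = (Fintype.card (Fin S → Fin m → Fin n) : ℝ) * F w0 := by
    rw [hPdef]
    simp [outerSeq, Finset.sum_const, Finset.card_univ, nsmul_eq_mul]
  have hPS : (Fintype.card (Fin S → Fin m → Fin n) : ℝ) * Fstar ≤ P S := by
    rw [hPdef]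
    calc (Fintype.card (Fin S → Fin m → Fin n) : ℝ) * Fstar
        = ∑ _ω : Fin S → Fin m → Fin n, Fstar := by
          rw [Finset.sum_const, Finset.card_univ, nsmul_eq_mul]
      _ ≤ _ := Finset.sum_le_sum fun ω _ => hFstar _
  calc ∑ s ∈ Finset.range S, ∑ ω : Fin S → Fin m → Fin n, ∑ t ∈ Finset.range (m + 1),
        ‖gradient F (innerSeq d n f F η
            (outerSeq d n m f F η w0 (ext2 hn m S ω) s) (ext2 hn m S ω s) t).1‖ ^ 2
      = ∑ s ∈ Finset.range S, Q s := rfl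
    _ ≤ 2 / η * (P 0 - P S) := hsum
    _ ≤ 2 / η * ((Fintype.card (Fin S → Fin m → Fin n) : ℝ) * (F w0 - Fstar)) := by
        have h1 : P 0 - P S ≤ (Fintype.card (Fin S → Fin m → Fin n) : ℝ) * (F w0 - Fstar) := by
          rw [hP0]; nlinarith [hPS]
        exact mul_le_mul_of_nonneg_left h1 (by positivity)

set_option maxHeartbeats 2000000 in
/-- **Complexity of SARAH for smooth nonconvex optimization** (Statement 2, Corollary 1
of the paper). With `η = 2/(3L√(m+1))` we have `η ≤ 2/(L(√(1+4m)+1))`; for every `ε > 0`,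
if `S ≥ 3L(F(w̃_0) - F*)/(√(m+1)ε)` then the average of the expected squared gradient
norms is at most `ε`; and the total number of stochastic gradient evaluations is
`S(n + 2m)`. -/
theorem sarah_nonconvex_complexity
    (d n m S : ℕ) (hn : 0 < n) (hS : 0 < S)
    (f : Fin n → Vec d → ℝ) (F : Vec d → ℝ)
    (hF : ∀ w, F w = (∑ i, f i w) / n)
    (hdiff : ∀ i, Differentiable ℝ (f i))
    (L η : ℝ) (hL : 0 < L)
    (havg : ∀ w w' : Vec d,
      (∑ i, ‖gradient (f i) w - gradient (f i) w'‖ ^ 2) / n ≤ L ^ 2 * ‖w - w'‖ ^ 2)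
    (hη : η = 2 / (3 * L * Real.sqrt ((m : ℝ) + 1)))
    (w0 : Vec d) (Fstar : ℝ) (hFstar : ∀ w, Fstar ≤ F w) :
    η ≤ 2 / (L * (Real.sqrt (1 + 4 * (m : ℝ)) + 1))
    ∧ (∀ ε : ℝ, 0 < ε →
        (S : ℝ) ≥ 3 * L * (F w0 - Fstar) / (Real.sqrt ((m : ℝ) + 1) * ε) →
        1 / (((m : ℝ) + 1) * (S : ℝ)) *
            ∑ s ∈ Finset.range S, ∑ t ∈ Finset.range (m + 1),
              sarahE n m S hn (fun ω =>
                ‖gradient F (innerSeq d n f F η (outerSeq d n m f F η w0 ω s) (ω s) t).1‖ ^ 2)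
          ≤ ε)
    ∧ sarahCost n m S = S * (n + 2 * m) := by
  classical
  set x : ℝ := Real.sqrt ((m : ℝ) + 1) with hxdef
  have hx0 : 0 < x := Real.sqrt_pos.mpr (by positivity)
  have hx2 : x ^ 2 = (m : ℝ) + 1 := Real.sq_sqrt (by positivity)
  have hx1 : 1 ≤ x := by nlinarith [hx0, hx2, Nat.cast_nonneg (α := ℝ) m]
  have hηpos : 0 < η := by rw [hη]; positivity
  have hLη : L * η * (3 * x) = 2 := by
    rw [hη]; field_simp
  have hcoef : L ^ 2 * η ^ 2 * (m : ℝ) + L * η ≤ 1 := by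
    have h9 : (L * η) ^ 2 * (9 * x ^ 2) = 4 := by
      calc (L * η) ^ 2 * (9 * x ^ 2) = (L * η * (3 * x)) ^ 2 := by ring
        _ = 4 := by rw [hLη]; norm_num
    nlinarith [h9, hLη, hx1, hx2, hx0, mul_nonneg hx0.le (sq_nonneg (x - 1)),
      sq_nonneg (x - 1), mul_pos hL hηpos]
  -- part 1
  have hy0 : 0 ≤ Real.sqrt (1 + 4 * (m : ℝ)) := Real.sqrt_nonneg _
  have hy2 : (Real.sqrt (1 + 4 * (m : ℝ))) ^ 2 = 1 + 4 * (m : ℝ) :=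
    Real.sq_sqrt (by positivity)
  have hyx : Real.sqrt (1 + 4 * (m : ℝ)) ≤ 2 * x := by
    nlinarith [hy0, hx0, hy2, hx2]
  have part1 : η ≤ 2 / (L * (Real.sqrt (1 + 4 * (m : ℝ)) + 1)) := by
    rw [hη, div_le_div_iff₀ (by positivity) (by positivity)]
    nlinarith [hyx, hx1, hL]
  -- gradient facts
  have hGval : ∀ z : Vec d, gradient F z = (n : ℝ)⁻¹ • ∑ i, gradient (f i) z := by
    intro z
    have h2 : HasGradientAt F ((n : ℝ)⁻¹ • ∑ i, gradient (f i) z) z := by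
      have hFe : F = fun w => (∑ i, f i w) / n := funext hF
      rw [hFe]
      exact hasGradAvg f hdiff z
    exact h2.gradient
  have hGrad : ∀ z : Vec d, HasGradientAt F (gradient F z) z := by
    intro z
    rw [hGval]
    have hFe : F = fun w => (∑ i, f i w) / n := funext hF
    rw [hFe]
    exact hasGradAvg f hdiff z
  have hnne : (n : ℝ) ≠ 0 := by positivity
  have hGavg : ∀ z : Vec d, (n : ℝ) • gradient F z = ∑ i, gradient (f i) z := by
    intro z
    rw [hGval, smul_smul, mul_inv_cancel₀ hnne, one_smul]
  have hLip : ∀ w w' : Vec d, ‖gradient F w - gradient F w'‖ ≤ L * ‖w - w'‖ := by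
    intro w w'
    have hdiffG : gradient F w - gradient F w'
        = (n : ℝ)⁻¹ • ∑ i, (gradient (f i) w - gradient (f i) w') := by
      rw [hGval, hGval, ← smul_sub, Finset.sum_sub_distrib]
    have h1 : ‖gradient F w - gradient F w'‖
        = (n : ℝ)⁻¹ * ‖∑ i, (gradient (f i) w - gradient (f i) w')‖ := by
      rw [hdiffG, norm_smul, Real.norm_eq_abs, abs_of_nonneg (by positivity)]
    have h2 : ‖∑ i, (gradient (f i) w - gradient (f i) w')‖
        ≤ ∑ i, ‖gradient (f i) w - gradient (f i) w'‖ :=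
      norm_sum_le _ _
    have h3 : (∑ i, ‖gradient (f i) w - gradient (f i) w'‖) ^ 2
        ≤ (n : ℝ) * ∑ i, ‖gradient (f i) w - gradient (f i) w'‖ ^ 2 := by
      have := sq_sum_le_card_mul_sum_sq
        (s := Finset.univ) (f := fun i => ‖gradient (f i) w - gradient (f i) w'‖)
      simpa using this
    have h4 : (∑ i, ‖gradient (f i) w - gradient (f i) w'‖ ^ 2)
        ≤ (n : ℝ) * (L ^ 2 * ‖w - w'‖ ^ 2) := by
      have := havg w w'
      rw [div_le_iff₀ (by positivity)] at this
      linarith [this]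
    have h5 : ‖gradient F w - gradient F w'‖ ^ 2 ≤ L ^ 2 * ‖w - w'‖ ^ 2 := by
      rw [h1, mul_pow]
      have hsum_nonneg : (0:ℝ) ≤ ∑ i, ‖gradient (f i) w - gradient (f i) w'‖ :=
        Finset.sum_nonneg fun i _ => norm_nonneg _
      have hnorm_nonneg := norm_nonneg (∑ i, (gradient (f i) w - gradient (f i) w'))
      have h2sq : ‖∑ i, (gradient (f i) w - gradient (f i) w')‖ ^ 2
          ≤ (∑ i, ‖gradient (f i) w - gradient (f i) w'‖) ^ 2 := by
        exact pow_le_pow_left₀ hnorm_nonneg h2 2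
      have hninv : (0:ℝ) < (n : ℝ)⁻¹ := by positivity
      have hstep : ‖∑ i, (gradient (f i) w - gradient (f i) w')‖ ^ 2
          ≤ (n : ℝ) * ((n : ℝ) * (L ^ 2 * ‖w - w'‖ ^ 2)) := by
        refine le_trans h2sq (le_trans h3 ?_)
        exact mul_le_mul_of_nonneg_left h4 (by positivity)
      calc ((n : ℝ)⁻¹) ^ 2 * ‖∑ i, (gradient (f i) w - gradient (f i) w')‖ ^ 2
          ≤ ((n : ℝ)⁻¹) ^ 2 * ((n : ℝ) * ((n : ℝ) * (L ^ 2 * ‖w - w'‖ ^ 2))) :=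
            mul_le_mul_of_nonneg_left hstep (by positivity)
        _ = L ^ 2 * ‖w - w'‖ ^ 2 := by
            field_simp
    nlinarith [h5, norm_nonneg (gradient F w - gradient F w'),
      mul_nonneg hL.le (norm_nonneg (w - w')), norm_nonneg (w - w')]
  refine ⟨part1, ?_, rfl⟩
  intro ε hε hSge
  set Ncard : ℝ := (Fintype.card (Fin S → Fin m → Fin n) : ℝ) with hNdef
  have hNpos : 0 < Ncard := by
    rw [hNdef]
    exact_mod_cast Fintype.card_pos_iff.mpr ⟨fun _ _ => (⟨0, hn⟩ : Fin n)⟩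
  have hsarah : ∀ X : (ℕ → ℕ → Fin n) → ℝ,
      sarahE n m S hn X
        = (∑ ω : Fin S → Fin m → Fin n, X (ext2 hn m S ω)) / Ncard := fun X => rfl
  have hTS : ∑ s ∈ Finset.range S, ∑ t ∈ Finset.range (m + 1),
        sarahE n m S hn (fun ω =>
          ‖gradient F (innerSeq d n f F η (outerSeq d n m f F η w0 ω s) (ω s) t).1‖ ^ 2)
      = (∑ s ∈ Finset.range S, ∑ ω : Fin S → Fin m → Fin n, ∑ t ∈ Finset.range (m + 1),
          ‖gradient F (innerSeq d n f F η
            (outerSeq d n m f F η w0 (ext2 hn m S ω) s) (ext2 hn m S ω s) t).1‖ ^ 2) / Ncard := by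
    simp only [hsarah, ← Finset.sum_div]
    congr 1
    exact Finset.sum_congr rfl fun s _ => Finset.sum_comm
  have houterB := outer_bound d n m S hn f F L η hL hηpos hcoef hGrad hGavg hLip havg
    w0 Fstar hFstar
  have hTS2 : ∑ s ∈ Finset.range S, ∑ t ∈ Finset.range (m + 1),
        sarahE n m S hn (fun ω =>
          ‖gradient F (innerSeq d n f F η (outerSeq d n m f F η w0 ω s) (ω s) t).1‖ ^ 2)
      ≤ 2 / η * (F w0 - Fstar) := by
    rw [hTS, div_le_iff₀ hNpos]
    calc ∑ s ∈ Finset.range S, ∑ ω : Fin S → Fin m → Fin n, ∑ t ∈ Finset.range (m + 1),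
          ‖gradient F (innerSeq d n f F η
            (outerSeq d n m f F η w0 (ext2 hn m S ω) s) (ext2 hn m S ω s) t).1‖ ^ 2
        ≤ 2 / η * (Ncard * (F w0 - Fstar)) := houterB
      _ = 2 / η * (F w0 - Fstar) * Ncard := by ring
  have hSpos : (0 : ℝ) < (S : ℝ) := by exact_mod_cast hS
  have h2η : 2 / η = 3 * L * x := by
    rw [hη, div_div_eq_mul_div]
    field_simp
  have hB0 : 0 ≤ F w0 - Fstar := by linarith [hFstar w0]
  have hfrac : 1 / (((m : ℝ) + 1) * (S : ℝ)) * (2 / η * (F w0 - Fstar)) ≤ ε := by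
    rw [h2η, ← hx2]
    have hS' : 3 * L * (F w0 - Fstar) ≤ (S : ℝ) * (x * ε) := by
      rw [ge_iff_le, div_le_iff₀ (by positivity)] at hSge
      linarith [hSge]
    rw [one_div, inv_mul_le_iff₀ (by positivity)]
    calc 3 * L * x * (F w0 - Fstar) = x * (3 * L * (F w0 - Fstar)) := by ring
      _ ≤ x * ((S : ℝ) * (x * ε)) := by
          exact mul_le_mul_of_nonneg_left hS' hx0.le
      _ = ε * (x ^ 2 * (S : ℝ)) := by ring
      _ = x ^ 2 * ↑S * ε := by ring
  calc 1 / (((m : ℝ) + 1) * (S : ℝ)) *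
        ∑ s ∈ Finset.range S, ∑ t ∈ Finset.range (m + 1),
          sarahE n m S hn (fun ω =>
            ‖gradient F (innerSeq d n f F η (outerSeq d n m f F η w0 ω s) (ω s) t).1‖ ^ 2)
      ≤ 1 / (((m : ℝ) + 1) * (S : ℝ)) * (2 / η * (F w0 - Fstar)) :=
        mul_le_mul_of_nonneg_left hTS2 (by positivity)
    _ ≤ ε := hfrac

end
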